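/- In the graph on ℕ where i ~ j iff δ ≤ |i - j| ≤ δ + m - 1 (with m, δ, t positive integers), the number of (t+2)-cliques containing a fixed vertex v as their minimum element equals the number of (t+1)-element subsets {i_1 < … < i_{t+1}} of {v+δ, …, v+δ+m-1} with i_{j} - i_{j-1} ≥ δ for all j (setting i_0 = v), and this number equals C(m - t(δ-1), t+1) = C(m - tδ + t, t+1) when m - tδ + t ≥ t+1, and 0 otherwise. -/

import Mathlib

open Finset



private lemma aux_between (s : Finset ℕ) (x y : ℕ) (hx : x ∈ s) (hy : y ∈ s) (hxy : x ≤ y) :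
    (s.filter (· < x)).card + (s.filter fun z => x < z ∧ z ≤ y).card
      = (s.filter (· < y)).card := by
  rcases eq_or_lt_of_le hxy with rfl | hlt
  · have h : (s.filter fun z => x < z ∧ z ≤ x) = ∅ :=
      Finset.filter_false_of_mem (fun z _ => by omega)
    simp [h]
  · have h1 : s.filter (· < y) = s.filter (· < x) ∪ s.filter (fun z => x ≤ z ∧ z < y) := by
      rw [← Finset.filter_or]
      exact Finset.filter_congr (fun z _ => by omega)
    have hdisj : Disjoint (s.filter (· < x)) (s.filter fun z => x ≤ z ∧ z < y) := by
      rw [Finset.disjoint_left]; intro z hz1 hz2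
      simp only [Finset.mem_filter] at hz1 hz2; omega
    have h2 : s.filter (fun z => x ≤ z ∧ z < y) = insert x (s.filter fun z => x < z ∧ z < y) := by
      ext z
      simp only [Finset.mem_filter, Finset.mem_insert]
      constructor
      · rintro ⟨hzs, hz1, hz2⟩
        rcases eq_or_lt_of_le hz1 with rfl | h
        · exact Or.inl rfl
        · exact Or.inr ⟨hzs, h, hz2⟩
      · rintro (rfl | ⟨hzs, hz1, hz2⟩)
        · exact ⟨hx, le_refl _, hlt⟩
        · exact ⟨hzs, le_of_lt hz1, hz2⟩
    have h3 : s.filter (fun z => x < z ∧ z ≤ y) = insert y (s.filter fun z => x < z ∧ z < y) := by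
      ext z
      simp only [Finset.mem_filter, Finset.mem_insert]
      constructor
      · rintro ⟨hzs, hz1, hz2⟩
        rcases eq_or_lt_of_le hz2 with rfl | h
        · exact Or.inl rfl
        · exact Or.inr ⟨hzs, hz1, h⟩
      · rintro (rfl | ⟨hzs, hz1, hz2⟩)
        · exact ⟨hy, hlt, le_refl _⟩
        · exact ⟨hzs, hz1, le_of_lt hz2⟩
    have hx' : x ∉ s.filter fun z => x < z ∧ z < y := by simp
    have hy' : y ∉ s.filter fun z => x < z ∧ z < y := by simp
    rw [h1, Finset.card_union_of_disjoint hdisj, h2, h3,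
      Finset.card_insert_of_notMem hx', Finset.card_insert_of_notMem hy']

private lemma gap_rank (δ : ℕ) (s : Finset ℕ)
    (hgap : ∀ x ∈ s, ∀ y ∈ s, x < y → x + δ ≤ y) :
    ∀ n : ℕ, ∀ x ∈ s, ∀ y ∈ s, x ≤ y →
      (s.filter fun z => x < z ∧ z ≤ y).card = n → x + δ * n ≤ y := by
  intro n
  induction n with
  | zero => intro x _ y _ hxy _; simpa using hxy
  | succ n ih =>
    intro x hx y hy hxy hcard
    have hne : (s.filter fun z => x < z ∧ z ≤ y).Nonempty := by
      rw [← Finset.card_pos, hcard]; omega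
    set w := (s.filter fun z => x < z ∧ z ≤ y).min' hne with hw
    have hwmem := (s.filter fun z => x < z ∧ z ≤ y).min'_mem hne
    rw [Finset.mem_filter] at hwmem
    obtain ⟨hws, hxw, hwy⟩ := hwmem
    have hmin : ∀ z ∈ s.filter fun z => x < z ∧ z ≤ y, w ≤ z := fun z hz =>
      Finset.min'_le _ z hz
    have heq : (s.filter fun z => w < z ∧ z ≤ y)
        = (s.filter fun z => x < z ∧ z ≤ y).erase w := by
      ext z
      simp only [Finset.mem_filter, Finset.mem_erase]
      constructor
      · rintro ⟨hzs, hz1, hz2⟩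
        exact ⟨by omega, hzs, by omega, hz2⟩
      · rintro ⟨hne', hzs, hz1, hz2⟩
        refine ⟨hzs, ?_, hz2⟩
        have := hmin z (Finset.mem_filter.mpr ⟨hzs, hz1, hz2⟩)
        omega
    have hcard' : (s.filter fun z => w < z ∧ z ≤ y).card = n := by
      rw [heq, Finset.card_erase_of_mem (Finset.mem_filter.mpr ⟨hws, hxw, hwy⟩), hcard]; omega
    have h1 := ih w hws y hy hwy hcard'
    have h2 := hgap x hx w hws hxw
    have h3 : δ * (n + 1) = δ * n + δ := by ring
    omega

private lemma injOn_of_mono (f : ℕ → ℕ) (u : Finset ℕ)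
    (hf : ∀ x ∈ u, ∀ y ∈ u, x < y → f x < f y) : Set.InjOn f ↑u := by
  intro a ha b hb hab
  by_contra hne
  rcases Nat.lt_or_ge a b with h | h
  · exact absurd hab (Nat.ne_of_lt (hf a ha b hb h))
  · have h' : b < a := by omega
    exact absurd hab.symm (Nat.ne_of_lt (hf b hb a ha h'))

private lemma rank_image (f : ℕ → ℕ) (u : Finset ℕ)
    (hf : ∀ x ∈ u, ∀ y ∈ u, x < y → f x < f y) :
    ∀ x ∈ u, ((u.image f).filter (· < f x)).card = (u.filter (· < x)).card := by
  intro x hx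
  have hinj := injOn_of_mono f u hf
  have heq : (u.image f).filter (· < f x) = (u.filter (· < x)).image f := by
    ext z
    simp only [Finset.mem_filter, Finset.mem_image]
    constructor
    · rintro ⟨⟨y, hy, rfl⟩, hlt⟩
      refine ⟨y, ⟨hy, ?_⟩, rfl⟩
      by_contra h
      push_neg at h
      rcases eq_or_lt_of_le h with rfl | h'
      · omega
      · exact absurd hlt (by have := hf x hx y hy h'; omega)
    · rintro ⟨y, ⟨hy1, hy2⟩, rfl⟩
      exact ⟨⟨y, hy1, rfl⟩, hf y hy1 x hx hy2⟩
  rw [heq, Finset.card_image_of_injOn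
    (hinj.mono (Finset.coe_subset.mpr (Finset.filter_subset _ _)))]

private lemma rank_lt_rank (u : Finset ℕ) {x y : ℕ} (hx : x ∈ u) (hxy : x < y) :
    (u.filter (· < x)).card < (u.filter (· < y)).card := by
  apply Finset.card_lt_card
  rw [Finset.ssubset_iff_of_subset (Finset.monotone_filter_right u ?_)]
  · exact ⟨x, Finset.mem_filter.mpr ⟨hx, hxy⟩, by simp⟩
  · intro z; exact fun _ h => lt_trans h hxy


-- rank monotone (non-strict)
private lemma rank_mono (u : Finset ℕ) {x y : ℕ} (hxy : x ≤ y) :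
    (u.filter (· < x)).card ≤ (u.filter (· < y)).card := by
  apply Finset.card_le_card
  apply Finset.monotone_filter_right
  intro z; exact fun _ h => lt_of_lt_of_le h hxy

-- chain from an arbitrary pair
private lemma gap_chain (δ : ℕ) (u : Finset ℕ)
    (hgap : ∀ x ∈ u, ∀ y ∈ u, x < y → x + δ ≤ y)
    {x y : ℕ} (hx : x ∈ u) (hy : y ∈ u) (hxy : x ≤ y) :
    x + δ * ((u.filter (· < y)).card - (u.filter (· < x)).card) ≤ y := by
  have hb := aux_between u x y hx hy hxy
  exact gap_rank δ u hgap _ x hx y hy hxy (by omega)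

private lemma chain_lower (δ : ℕ) (u : Finset ℕ)
    (hgap : ∀ x ∈ u, ∀ y ∈ u, x < y → x + δ ≤ y)
    {x : ℕ} (hx : x ∈ u) (hne : u.Nonempty) :
    u.min' hne + δ * (u.filter (· < x)).card ≤ x := by
  have hmn := u.min'_mem hne
  have hmnle : u.min' hne ≤ x := u.min'_le x hx
  have h0 : (u.filter (· < u.min' hne)) = ∅ :=
    Finset.filter_false_of_mem (fun z hz => by have := u.min'_le z hz; omega)
  have := gap_chain δ u hgap hmn hx hmnle
  rw [h0] at this
  simpa using this

private lemma rank_max (u : Finset ℕ) (hne : u.Nonempty) :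
    (u.filter (· < u.max' hne)).card = u.card - 1 := by
  have h : u.filter (· < u.max' hne) = u.erase (u.max' hne) := by
    ext z
    simp only [Finset.mem_filter, Finset.mem_erase]
    constructor
    · rintro ⟨hz, hlt⟩; exact ⟨by omega, hz⟩
    · rintro ⟨hne', hz⟩
      have := u.le_max' z hz
      exact ⟨hz, by omega⟩
  rw [h, Finset.card_erase_of_mem (u.max'_mem hne)]

private lemma chain_upper (δ : ℕ) (u : Finset ℕ)
    (hgap : ∀ x ∈ u, ∀ y ∈ u, x < y → x + δ ≤ y)
    {x : ℕ} (hx : x ∈ u) (hne : u.Nonempty) :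
    x + δ * (u.card - 1 - (u.filter (· < x)).card) ≤ u.max' hne := by
  have := gap_chain δ u hgap hx (u.max'_mem hne) (u.le_max' x hx)
  rwa [rank_max u hne] at this

-- rank bound
private lemma rank_lt_card (u : Finset ℕ) {x : ℕ} (hx : x ∈ u) :
    (u.filter (· < x)).card < u.card := by
  apply Finset.card_lt_card
  rw [Finset.ssubset_iff_of_subset (Finset.filter_subset _ _)]
  exact ⟨x, hx, by simp⟩

-- decompression map is strictly monotone on any set
private lemma decomp_mono (g : ℕ) (u : Finset ℕ) :
    ∀ x ∈ u, ∀ y ∈ u, x < y →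
      x + g * (u.filter (· < x)).card < y + g * (u.filter (· < y)).card := by
  intro x hx y hy hxy
  have h1 : (u.filter (· < x)).card ≤ (u.filter (· < y)).card :=
    le_of_lt (rank_lt_rank u hx hxy)
  have h2 : g * (u.filter (· < x)).card ≤ g * (u.filter (· < y)).card :=
    Nat.mul_le_mul_left g h1
  omega

-- comp ∘ decomp = id on all finsets
private lemma comp_decomp (g : ℕ) (u : Finset ℕ) :
    ((u.image fun y => y + g * (u.filter (· < y)).card).image
      fun z => z - g * (((u.image fun y => y + g * (u.filter (· < y)).card).filter
        (· < z)).card)) = u := by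
  set f : ℕ → ℕ := fun y => y + g * (u.filter (· < y)).card with hf
  have hmono := decomp_mono g u
  rw [Finset.image_image]
  have h : ∀ x ∈ u, ((fun z => z - g * (((u.image f).filter (· < z)).card)) ∘ f) x = id x := by
    intro x hx
    simp only [Function.comp_apply, id_eq]
    rw [rank_image f u hmono x hx]
    simp [hf]
  rw [Finset.image_congr h, Finset.image_id]

-- compression map is strictly monotone on gap sets
private lemma comp_mono (g : ℕ) (u : Finset ℕ)
    (hgap : ∀ x ∈ u, ∀ y ∈ u, x < y → x + (g + 1) ≤ y) :
    ∀ x ∈ u, ∀ y ∈ u, x < y →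
      x - g * (u.filter (· < x)).card < y - g * (u.filter (· < y)).card := by
  intro x hx y hy hxy
  have hne : u.Nonempty := ⟨x, hx⟩
  set rx := (u.filter (· < x)).card with hrx
  set ry := (u.filter (· < y)).card with hry
  have hr : rx < ry := rank_lt_rank u hx hxy
  have hc := gap_chain (g+1) u hgap hx hy (le_of_lt hxy)
  rw [← hrx, ← hry] at hc
  have hlx := chain_lower (g+1) u hgap hx hne
  rw [← hrx] at hlx
  have hly := chain_lower (g+1) u hgap hy hne
  rw [← hry] at hly
  -- linear-ize products
  have e1 : (g+1) * rx = g * rx + rx := by ring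
  have e2 : (g+1) * ry = g * ry + ry := by ring
  have e3 : (g+1) * (ry - rx) = g * (ry - rx) + (ry - rx) := by ring
  have e4 : g * ry = g * rx + g * (ry - rx) := by
    rw [← Nat.mul_add]; congr 1; omega
  omega

-- bound needed for subtraction:  g * rank ≤ x for gap sets
private lemma comp_sub_le (g : ℕ) (u : Finset ℕ)
    (hgap : ∀ x ∈ u, ∀ y ∈ u, x < y → x + (g + 1) ≤ y)
    {x : ℕ} (hx : x ∈ u) : g * (u.filter (· < x)).card ≤ x := by
  have hne : u.Nonempty := ⟨x, hx⟩
  have := chain_lower (g+1) u hgap hx hne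
  have e1 : (g+1) * (u.filter (· < x)).card
      = g * (u.filter (· < x)).card + (u.filter (· < x)).card := by ring
  omega

-- decomp ∘ comp = id on gap sets
private lemma decomp_comp (g : ℕ) (u : Finset ℕ)
    (hgap : ∀ x ∈ u, ∀ y ∈ u, x < y → x + (g + 1) ≤ y) :
    ((u.image fun x => x - g * (u.filter (· < x)).card).image
      fun z => z + g * (((u.image fun x => x - g * (u.filter (· < x)).card).filter
        (· < z)).card)) = u := by
  set f : ℕ → ℕ := fun x => x - g * (u.filter (· < x)).card with hf
  have hmono := comp_mono g u hgap
  rw [Finset.image_image]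
  have h : ∀ x ∈ u, ((fun z => z + g * (((u.image f).filter (· < z)).card)) ∘ f) x = id x := by
    intro x hx
    simp only [Function.comp_apply, id_eq]
    rw [rank_image f u hmono x hx]
    have := comp_sub_le g u hgap hx
    simp only [hf]
    omega
  rw [Finset.image_congr h, Finset.image_id]


theorem stmt_5 (m t δ v : ℕ) (hm : 1 ≤ m) (ht : 1 ≤ t) (hδ : 1 ≤ δ)
    (G : SimpleGraph ℕ)
    (hG : ∀ i j : ℕ, G.Adj i j ↔
      (δ : ℤ) ≤ |(i : ℤ) - (j : ℤ)| ∧ |(i : ℤ) - (j : ℤ)| ≤ (δ : ℤ) + m - 1) :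
    {s : Finset ℕ | G.IsNClique (t + 2) s ∧ v ∈ s ∧ ∀ u ∈ s, v ≤ u}.ncard =
      {s : Finset ℕ | s.card = t + 1 ∧ (∀ x ∈ s, v + δ ≤ x ∧ x ≤ v + δ + m - 1) ∧
        ∀ x ∈ s, ∀ y ∈ s, x < y → x + δ ≤ y}.ncard ∧
    {s : Finset ℕ | s.card = t + 1 ∧ (∀ x ∈ s, v + δ ≤ x ∧ x ≤ v + δ + m - 1) ∧
        ∀ x ∈ s, ∀ y ∈ s, x < y → x + δ ≤ y}.ncard =
      (if t + 1 ≤ m - t * δ + t then Nat.choose (m - t * δ + t) (t + 1) else 0) := by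
  obtain ⟨g, rfl⟩ : ∃ g, δ = g + 1 := ⟨δ - 1, by omega⟩
  set B : Set (Finset ℕ) := {s : Finset ℕ | s.card = t + 1 ∧
      (∀ x ∈ s, v + (g+1) ≤ x ∧ x ≤ v + (g+1) + m - 1) ∧
      ∀ x ∈ s, ∀ y ∈ s, x < y → x + (g+1) ≤ y} with hB
  have hadj : ∀ i j : ℕ, i + (g+1) ≤ j → j ≤ i + (g+1) + m - 1 → G.Adj i j := by
    intro i j h1 h2
    rw [hG]
    have habs : |(i:ℤ) - j| = (j:ℤ) - i := by
      rw [abs_sub_comm]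
      exact abs_of_nonneg (by omega)
    rw [habs]
    constructor <;> push_cast <;> omega
  have hadj' : ∀ i j : ℕ, G.Adj i j → i ≤ j →
      i + (g+1) ≤ j ∧ j ≤ i + (g+1) + m - 1 := by
    intro i j h hle
    rw [hG] at h
    obtain ⟨h1, h2⟩ := h
    rcases abs_cases ((i:ℤ) - j) with ⟨he, _⟩ | ⟨he, _⟩ <;> rw [he] at h1 h2 <;>
      constructor <;> omega
  constructor
  · -- Part 1
    have hpart1 : {s : Finset ℕ | G.IsNClique (t + 2) s ∧ v ∈ s ∧ ∀ u ∈ s, v ≤ u}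
        = (fun s => insert v s) '' B := by
      ext s
      simp only [Set.mem_setOf_eq, Set.mem_image, hB]
      constructor
      · rintro ⟨hclique, hv, hmin⟩
        refine ⟨s.erase v, ⟨?_, ?_, ?_⟩, Finset.insert_erase hv⟩
        · rw [Finset.card_erase_of_mem hv, hclique.card_eq]; omega
        · intro x hx
          have hxs := Finset.mem_of_mem_erase hx
          have hxv : x ≠ v := Finset.ne_of_mem_erase hx
          have ha : G.Adj v x := hclique.isClique (Finset.mem_coe.mpr hv)
            (Finset.mem_coe.mpr hxs) (Ne.symm hxv)
          exact hadj' v x ha (hmin x hxs)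
        · intro x hx y hy hxy
          have ha : G.Adj x y := hclique.isClique
            (Finset.mem_coe.mpr (Finset.mem_of_mem_erase hx))
            (Finset.mem_coe.mpr (Finset.mem_of_mem_erase hy)) (by omega)
          exact (hadj' x y ha (le_of_lt hxy)).1
      · rintro ⟨s', ⟨hcard, hrange, hgap⟩, rfl⟩
        have hvs' : v ∉ s' := fun h => by have := (hrange v h).1; omega
        refine ⟨⟨?_, ?_⟩, Finset.mem_insert_self v s', ?_⟩
        · intro x hx y hy hxy
          rw [Finset.coe_insert, Set.mem_insert_iff, Finset.mem_coe] at hx hy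
          rcases hx with rfl | hx
          · rcases hy with rfl | hy
            · exact absurd rfl hxy
            · exact hadj x y ((hrange y hy).1) ((hrange y hy).2)
          · rcases hy with rfl | hy
            · exact (hadj y x ((hrange x hx).1) ((hrange x hx).2)).symm
            · rcases Nat.lt_or_ge x y with h | h
              · apply hadj x y (hgap x hx y hy h)
                have h1 := (hrange x hx).1
                have h2 := (hrange y hy).2
                omega
              · have h' : y < x := by omega
                apply (hadj y x (hgap y hy x hx h') ?_).symm
                have h1 := (hrange y hy).1
                have h2 := (hrange x hx).2
                omega
        · rw [Finset.card_insert_of_notMem hvs', hcard]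
        · intro u hu
          rcases Finset.mem_insert.mp hu with rfl | hu
          · exact le_refl _
          · have := (hrange u hu).1; omega
    have hinj1 : Set.InjOn (fun s => insert v s) B := by
      rintro s1 ⟨_, hr1, _⟩ s2 ⟨_, hr2, _⟩ h
      have h1 : v ∉ s1 := fun hh => by have := (hr1 v hh).1; omega
      have h2 : v ∉ s2 := fun hh => by have := (hr2 v hh).1; omega
      have := congrArg (fun w : Finset ℕ => w.erase v) h
      simpa [Finset.erase_insert h1, Finset.erase_insert h2] using this
    rw [hpart1, Set.ncard_image_of_injOn hinj1]
  · -- Part 2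
    by_cases hcase : t * (g+1) < m
    · -- nontrivial case
      set a := v + (g+1) with ha
      set b' := a + (m - 1 - t * g) with hb'
      set C : Set (Finset ℕ) := {s : Finset ℕ | s.card = t + 1 ∧ s ⊆ Finset.Icc a b'}
        with hC
      set D : Finset ℕ → Finset ℕ :=
        fun u => u.image (fun y => y + g * (u.filter (· < y)).card) with hD
      set Cp : Finset ℕ → Finset ℕ :=
        fun w => w.image (fun z => z - g * (w.filter (· < z)).card) with hCp
      have hDCp : ∀ u : Finset ℕ, Cp (D u) = u := fun u => comp_decomp g u
      have hCpD : ∀ u : Finset ℕ,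
          (∀ x ∈ u, ∀ y ∈ u, x < y → x + (g+1) ≤ y) → D (Cp u) = u :=
        fun u h => decomp_comp g u h
      have e7 : t * (g+1) = g * t + t := by ring
      have hBC : B = D '' C := by
        ext s
        simp only [hB, hC, Set.mem_setOf_eq, Set.mem_image]
        constructor
        · rintro ⟨hcard, hrange, hgap⟩
          have hne : s.Nonempty := Finset.card_pos.mp (by omega)
          refine ⟨Cp s, ⟨?_, ?_⟩, hCpD s hgap⟩
          · rw [hCp]
            rw [Finset.card_image_of_injOn (injOn_of_mono _ _ (comp_mono g s hgap)), hcard]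
          · intro z hz
            rw [hCp] at hz
            simp only [Finset.mem_image] at hz
            obtain ⟨x, hx, rfl⟩ := hz
            set rx := (s.filter (· < x)).card with hrx
            have hrxt : rx ≤ t := by
              have := rank_lt_card s hx; omega
            have hlow := chain_lower (g+1) s hgap hx hne
            rw [← hrx] at hlow
            have hmn := (hrange _ (s.min'_mem hne)).1
            have hup := chain_upper (g+1) s hgap hx hne
            rw [← hrx] at hup
            have hmx := (hrange _ (s.max'_mem hne)).2
            rw [hcard] at hup
            have hceq : t + 1 - 1 - rx = t - rx := by omega
            rw [hceq] at hup
            have e1 : (g+1) * rx = g * rx + rx := by ring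
            have e5 : (g+1) * (t - rx) = g * (t - rx) + (t - rx) := by ring
            have e6 : g * t = g * rx + g * (t - rx) := by
              rw [← Nat.mul_add]; congr 1; omega
            have e8 : t * g = g * t := by ring
            rw [Finset.mem_Icc]
            omega
        · rintro ⟨u, ⟨hcard, hsub⟩, rfl⟩
          have hmono := decomp_mono g u
          refine ⟨?_, ?_, ?_⟩
          · rw [hD]
            rw [Finset.card_image_of_injOn (injOn_of_mono _ _ hmono), hcard]
          · intro z hz
            rw [hD] at hz
            simp only [Finset.mem_image] at hz
            obtain ⟨y, hy, rfl⟩ := hz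
            set ry := (u.filter (· < y)).card with hry
            have hryt : ry ≤ t := by have := rank_lt_card u hy; omega
            have hmul : g * ry ≤ g * t := Nat.mul_le_mul_left g hryt
            have hyb := Finset.mem_Icc.mp (hsub hy)
            have e8 : t * g = g * t := by ring
            constructor <;> omega
          · intro z1 hz1 z2 hz2 hlt
            rw [hD] at hz1 hz2
            simp only [Finset.mem_image] at hz1 hz2
            obtain ⟨x, hx, rfl⟩ := hz1
            obtain ⟨y, hy, rfl⟩ := hz2
            have hxy : x < y := by
              by_contra h
              push_neg at h
              rcases eq_or_lt_of_le h with rfl | h'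
              · omega
              · have := hmono y hy x hx h'; omega
            have hr := rank_lt_rank u hx hxy
            have hmul : g * ((u.filter (· < x)).card + 1) ≤ g * ((u.filter (· < y)).card) :=
              Nat.mul_le_mul_left g hr
            have e : g * ((u.filter (· < x)).card + 1) = g * (u.filter (· < x)).card + g := by
              ring
            omega
      have hinjD : Set.InjOn D C := by
        intro u1 _ u2 _ h
        have h1 := hDCp u1
        have h2 := hDCp u2
        rw [h] at h1
        rw [h1] at h2
        exact h2
      rw [hBC, Set.ncard_image_of_injOn hinjD]
      have hCfin : C = ↑((Finset.Icc a b').powersetCard (t+1)) := by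
        ext s
        simp only [hC, Set.mem_setOf_eq, Finset.mem_coe, Finset.mem_powersetCard]
        tauto
      rw [hCfin, Set.ncard_coe_finset, Finset.card_powersetCard, Nat.card_Icc]
      have harg : b' + 1 - a = m - t * (g+1) + t := by
        have e8 : t * g = g * t := by ring
        omega
      rw [harg, if_pos (by omega)]
    · -- degenerate case : B is empty
      have hBempty : B = ∅ := by
        rw [Set.eq_empty_iff_forall_notMem]
        rintro s ⟨hcard, hrange, hgap⟩
        have hne : s.Nonempty := Finset.card_pos.mp (by omega)
        have hup := chain_upper (g+1) s hgap (s.min'_mem hne) hne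
        have h0 : (s.filter (· < s.min' hne)) = ∅ :=
          Finset.filter_false_of_mem (fun z hz => by have := s.min'_le z hz; omega)
        rw [h0, hcard] at hup
        simp only [Finset.card_empty, Nat.sub_zero] at hup
        have hceq : t + 1 - 1 = t := by omega
        rw [hceq] at hup
        have hmn := (hrange _ (s.min'_mem hne)).1
        have hmx := (hrange _ (s.max'_mem hne)).2
        have e : (g+1) * t = t * (g+1) := by ring
        omega
      rw [hBempty, Set.ncard_empty, if_neg (by omega)]
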